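/- Let (X,d) be an unbounded ultrametric space with base point a, such that (X,d_a) is C-uniformly perfect, where d_a is the chordal metric on Ẋ = X ∪ {∞}. Then (Ẋ, d_a) is C-uniformly perfect. -/
import Mathlib


/-- The chordal function `d_a` on `Ẋ = X ∪ {∞}` (modelled as `Option X`,
with `none` playing the role of `∞`):
`d_a(x,y) = d(x,y)/(max{1,d(x,a)}·max{1,d(y,a)})` for `x, y ∈ X`,
`d_a(x,∞) = 1/max{1,d(x,a)}`, and `d_a(∞,∞) = 0`. -/
noncomputable def chordal {X : Type*} [MetricSpace X] (a : X) :
    Option X → Option X → ℝ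
  | some x, some y => dist x y / (max 1 (dist x a) * max 1 (dist y a))
  | some x, none => 1 / max 1 (dist x a)
  | none, some y => 1 / max 1 (dist y a)
  | none, none => 0

/-- Let `(X,d)` be an unbounded ultrametric space with base
point `a` such that `(X, d_a)` is `C`-uniformly perfect. Then
`(Ẋ, d_a) = (X ∪ {∞}, d_a)` is `C`-uniformly perfect. (Balls are taken with
respect to the chordal function `d_a`.) -/
theorem chordal_extension_uniformly_perfect {X : Type*} [MetricSpace X]
    (hu : ∀ x y z : X, dist x y ≤ max (dist x z) (dist z y))
    (a : X) (hub : ∀ R : ℝ, ∃ x : X, R < dist x a)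
    (C : ℝ) (hC : 1 < C)
    (hX : ∀ (x : X) (r : ℝ), 0 < r →
      (∃ y : X, r ≤ chordal a (some x) (some y)) →
      ∃ z : X, chordal a (some x) (some z) < r ∧
        r / C ≤ chordal a (some x) (some z)) :
    ∀ (p : Option X) (r : ℝ), 0 < r →
      (∃ q : Option X, r ≤ chordal a p q) →
      ∃ q : Option X, chordal a p q < r ∧ r / C ≤ chordal a p q := by
  -- ultrametric: if d(z,a) < d(x,a) then d(x,z) = d(x,a)
  have key : ∀ (x z : X), dist z a < dist x a → dist x z = dist x a := by
    intro x z h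
    refine le_antisymm ?_ ?_
    · calc dist x z ≤ max (dist x a) (dist a z) := hu x z a
        _ = dist x a := max_eq_left (by rw [dist_comm]; linarith)
    · rcases le_max_iff.mp (hu x a z) with h1 | h1
      · exact h1
      · linarith
  intro p r hr hq
  cases p with
  | some x =>
      obtain ⟨y0, hy0⟩ : ∃ y : X, r ≤ chordal a (some x) (some y) := by
        obtain ⟨q, hq⟩ := hq
        cases q with
        | some y => exact ⟨y, hq⟩
        | none =>
            obtain ⟨y, hy⟩ := hub (max 1 (dist x a))
            have h1 : (1:ℝ) < dist y a := lt_of_le_of_lt (le_max_left _ _) hy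
            have h2 : dist x a < dist y a := lt_of_le_of_lt (le_max_right _ _) hy
            have hxy : dist x y = dist y a := by
              rw [dist_comm]; exact key y x h2
            refine ⟨y, ?_⟩
            have hval : chordal a (some x) (some y) = 1 / max 1 (dist x a) := by
              simp only [chordal]
              rw [hxy, max_eq_right h1.le, mul_comm, ← div_div,
                div_self (ne_of_gt (lt_trans zero_lt_one h1))]
            rw [hval]
            exact hq
      obtain ⟨z, hz1, hz2⟩ := hX x r hr ⟨y0, hy0⟩
      exact ⟨some z, hz1, hz2⟩
  | none =>
      obtain ⟨q, hq⟩ := hq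
      cases q with
      | none => simp only [chordal] at hq; linarith
      | some y =>
          simp only [chordal] at hq
          have hr1 : r ≤ 1 := by
            refine hq.trans ?_
            rw [div_le_one (lt_of_lt_of_le zero_lt_one (le_max_left _ _))]
            exact le_max_left _ _
          obtain ⟨x, hx⟩ := hub (max 1 (C / r))
          have hx1 : (1:ℝ) < dist x a := lt_of_le_of_lt (le_max_left _ _) hx
          have hxC : C / r < dist x a := lt_of_le_of_lt (le_max_right _ _) hx
          have hMx : max 1 (dist x a) = dist x a := max_eq_right hx1.le
          have hwit : r ≤ chordal a (some x) (some a) := by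
            simp only [chordal, dist_self, max_eq_left zero_le_one, mul_one, hMx,
              div_self (ne_of_gt (lt_trans zero_lt_one hx1))]
            exact hr1
          obtain ⟨z, hz1, hz2⟩ := hX x r hr ⟨a, hwit⟩
          have hza : dist z a < dist x a := by
            by_contra h
            push_neg at h
            have hMz : max 1 (dist z a) = dist z a :=
              max_eq_right (le_trans hx1.le h)
            have hxz : dist x z ≤ dist z a := by
              calc dist x z ≤ max (dist x a) (dist a z) := hu x z a
                _ ≤ dist z a := by rw [dist_comm a z]; exact max_le h le_rfl
            have hzpos : (0:ℝ) < dist z a := lt_of_lt_of_le (lt_trans zero_lt_one hx1) h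
            have hbound : chordal a (some x) (some z) ≤ 1 / dist x a := by
              simp only [chordal, hMx, hMz]
              rw [div_le_div_iff₀ (by positivity) (lt_trans zero_lt_one hx1)]
              calc dist x z * dist x a ≤ dist z a * dist x a := by
                    exact mul_le_mul_of_nonneg_right hxz dist_nonneg
                _ = 1 * (dist x a * dist z a) := by ring
            have hsmall : 1 / dist x a < r / C := by
              rw [div_lt_div_iff₀ (lt_trans zero_lt_one hx1) (lt_trans zero_lt_one hC)]
              have := (div_lt_iff₀ hr).mp hxC
              linarith [mul_comm r (dist x a)]
            linarith
          have hxz : dist x z = dist x a := key x z hza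
          have heq : chordal a (some x) (some z) = 1 / max 1 (dist z a) := by
            simp only [chordal, hxz, hMx]
            rw [div_mul_eq_div_div, div_self (ne_of_gt (lt_trans zero_lt_one hx1))]
          refine ⟨some z, ?_, ?_⟩
          · show 1 / max 1 (dist z a) < r
            rw [← heq]; exact hz1
          · show r / C ≤ 1 / max 1 (dist z a)
            rw [← heq]; exact hz2
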